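/- Let m ≥ 1 and let g_1,…,g_m be elements of the homogeneous component S_c such that any two of them are ℂ-linearly independent. Then the m products ∏_{j≠i} g_j (for 1 ≤ i ≤ m) form a ℂ-basis of the homogeneous component S_{(m−1)c}. -/

import Mathlib

noncomputable section

open MvPolynomial

def LRel (ι : Type) [DecidableEq ι] (p : ι → ℕ) : AddSubgroup (Option ι → ℤ) :=
  AddSubgroup.closure
    { v | ∃ i : ι, v = (p i : ℤ) • Pi.single (some i) 1 - Pi.single (none : Option ι) 1 }

abbrev LGroup (ι : Type) [DecidableEq ι] (p : ι → ℕ) : Type :=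
  (Option ι → ℤ) ⧸ LRel ι p

def egen {ι : Type} [DecidableEq ι] (p : ι → ℕ) (i : ι) : LGroup ι p :=
  QuotientAddGroup.mk (Pi.single (some i) 1)

def cgen {ι : Type} [DecidableEq ι] (p : ι → ℕ) : LGroup ι p :=
  QuotientAddGroup.mk (Pi.single (none : Option ι) 1)

def Lplus {ι : Type} [DecidableEq ι] (p : ι → ℕ) : AddSubmonoid (LGroup ι p) :=
  AddSubmonoid.closure (Set.range (egen p))

abbrev SPoly (ι : Type) : Type := MvPolynomial (ι ⊕ Fin 2) ℂ

def SIdl (ι : Type) (p : ι → ℕ) (c0 c1 : ι → ℂ) : Ideal (SPoly ι) :=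
  Ideal.span { f | ∃ i : ι,
    f = X (Sum.inl i) ^ (p i) - (C (c0 i) * X (Sum.inr 0) + C (c1 i) * X (Sum.inr 1)) }

abbrev SAlg (ι : Type) (p : ι → ℕ) (c0 c1 : ι → ℂ) : Type := SPoly ι ⧸ SIdl ι p c0 c1

def wtA {ι : Type} [Fintype ι] [DecidableEq ι] (p : ι → ℕ) (m : (ι ⊕ Fin 2) →₀ ℕ) :
    LGroup ι p :=
  (∑ i : ι, m (Sum.inl i) • egen p i) + (m (Sum.inr 0) + m (Sum.inr 1)) • cgen p

def polyCompA {ι : Type} [Fintype ι] [DecidableEq ι] (p : ι → ℕ) (y : LGroup ι p) :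
    Submodule ℂ (SPoly ι) where
  carrier := { f | ∀ m, coeff m f ≠ 0 → wtA p m = y }
  add_mem' := by
    intro f g hf hg m hm
    by_cases h : coeff m f = 0
    · refine hg m fun h' => hm ?_
      simp [coeff_add, h, h']
    · exact hf m h
  zero_mem' := by
    intro m hm
    simp at hm
  smul_mem' := by
    intro c f hf m hm
    refine hf m fun h => hm ?_
    simp [coeff_smul, h]

def SCompA {ι : Type} [Fintype ι] [DecidableEq ι] (p : ι → ℕ) (c0 c1 : ι → ℂ)
    (y : LGroup ι p) : Submodule ℂ (SAlg ι p c0 c1) :=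
  (polyCompA p y).map (Ideal.Quotient.mkₐ ℂ (SIdl ι p c0 c1)).toLinearMap

def SVerA {ι : Type} [Fintype ι] [DecidableEq ι] (p : ι → ℕ) (c0 c1 : ι → ℂ)
    (x : LGroup ι p) : Submodule ℂ (SAlg ι p c0 c1) :=
  ⨆ k : ℤ, SCompA p c0 c1 (k • x)

def SShiftA {ι : Type} [Fintype ι] [DecidableEq ι] (p : ι → ℕ) (c0 c1 : ι → ℂ)
    (y x : LGroup ι p) : Submodule ℂ (SAlg ι p c0 c1) :=
  ⨆ k : ℤ, SCompA p c0 c1 (y + k • x)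


/- ### Auxiliary machinery -/

section Aux

lemma eval_zero_of_mem_SIdl {ι : Type} (p : ι → ℕ) (c0 c1 : ι → ℂ) (v : Fin 2 → ℂ) (x : ι → ℂ)
    (hx : ∀ i, x i ^ p i = c0 i * v 0 + c1 i * v 1)
    {f : SPoly ι} (hf : f ∈ SIdl ι p c0 c1) :
    eval (Sum.elim x v) f = 0 := by
  have : SIdl ι p c0 c1 ≤ RingHom.ker (eval (Sum.elim x v)) := by
    rw [SIdl, Ideal.span_le]
    rintro _ ⟨i, rfl⟩
    simp [RingHom.mem_ker, hx i]
  exact this hf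

lemma eq_zero_of_rename_mem_SIdl {ι : Type} (p : ι → ℕ) (c0 c1 : ι → ℂ)
    (hp : ∀ i, 0 < p i) {f : MvPolynomial (Fin 2) ℂ}
    (hf : (rename Sum.inr f : SPoly ι) ∈ SIdl ι p c0 c1) : f = 0 := by
  apply MvPolynomial.funext
  intro v
  have hx : ∀ i : ι, ∃ z : ℂ, z ^ p i = c0 i * v 0 + c1 i * v 1 := fun i =>
    IsAlgClosed.exists_pow_nat_eq _ (hp i)
  choose x hx using hx
  have := eval_zero_of_mem_SIdl p c0 c1 v x hx hf
  rw [eval_rename] at this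
  simpa using this

variable {ι : Type} [Fintype ι] [DecidableEq ι] (p : ι → ℕ)

def baseHom {A : Type} [AddCommGroup A] (f : Option ι → A) : (Option ι → ℤ) →+ A where
  toFun v := ∑ o : Option ι, v o • f o
  map_zero' := by simp
  map_add' v w := by simp [add_smul, Finset.sum_add_distrib]

lemma baseHom_single {A : Type} [AddCommGroup A] (f : Option ι → A) (o : Option ι) (k : ℤ) :
    baseHom f (Pi.single o k) = k • f o := by
  rw [baseHom]
  simp only [AddMonoidHom.coe_mk, ZeroHom.coe_mk]
  rw [Finset.sum_eq_single o]
  · simp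
  · intro b _ hb; rw [Pi.single_eq_of_ne hb]; simp
  · simp

def liftL {A : Type} [AddCommGroup A] (f : Option ι → A)
    (hf : ∀ i, (p i : ℤ) • f (some i) = f none) : LGroup ι p →+ A :=
  QuotientAddGroup.lift _ (baseHom f) (by
    intro v hv
    revert hv
    rw [LRel]
    refine fun hv => AddSubgroup.closure_induction ?_ ?_ ?_ ?_ hv
    · rintro _ ⟨i, rfl⟩
      rw [AddMonoidHom.mem_ker, map_sub, map_zsmul, baseHom_single, baseHom_single, one_smul,
        one_smul, hf i, sub_self]
    · simp
    · intro a b _ _ ha hb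
      rw [AddMonoidHom.mem_ker] at ha hb ⊢; rw [map_add, ha, hb, add_zero]
    · intro a _ ha
      rw [AddMonoidHom.mem_ker] at ha ⊢; rw [map_neg, ha, neg_zero])

lemma liftL_egen {A : Type} [AddCommGroup A] (f : Option ι → A)
    (hf : ∀ i, (p i : ℤ) • f (some i) = f none) (i : ι) :
    liftL p f hf (egen p i) = f (some i) := by
  rw [liftL, egen]
  erw [QuotientAddGroup.lift_mk]
  rw [baseHom_single, one_smul]

lemma liftL_cgen {A : Type} [AddCommGroup A] (f : Option ι → A)
    (hf : ∀ i, (p i : ℤ) • f (some i) = f none) :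
    liftL p f hf (cgen p) = f none := by
  rw [liftL, cgen]
  erw [QuotientAddGroup.lift_mk]
  rw [baseHom_single, one_smul]

lemma p_smul_egen (i : ι) : p i • egen p i = cgen p := by
  have he : egen p i = QuotientAddGroup.mk' (LRel ι p) (Pi.single (some i) 1) := rfl
  have hc : cgen p = QuotientAddGroup.mk' (LRel ι p) (Pi.single (none : Option ι) 1) := rfl
  rw [he, hc, ← map_nsmul, QuotientAddGroup.mk'_eq_mk', ]
  refine ⟨-((p i : ℤ) • Pi.single (some i) 1 - Pi.single (none : Option ι) 1), ?_, ?_⟩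
  · exact AddSubgroup.neg_mem _ (AddSubgroup.subset_closure ⟨i, rfl⟩)
  · funext o
    simp [natCast_zsmul]

def NN : ℕ := ∏ i : ι, p i

lemma p_dvd_NN (i : ι) : p i ∣ NN p := Finset.dvd_prod_of_mem _ (Finset.mem_univ i)

lemma NN_pos (hp : ∀ i, 0 < p i) : 0 < NN p := Finset.prod_pos (fun i _ => hp i)

def W1 : LGroup ι p →+ ℤ :=
  liftL p (fun o => Option.rec ((NN p : ℤ)) (fun i => (NN p : ℤ) / p i) o)
    (fun i => by
      rw [smul_eq_mul]
      exact Int.mul_ediv_cancel' (Int.natCast_dvd_natCast.mpr (p_dvd_NN p i)))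

def W2 (i : ι) : LGroup ι p →+ ZMod (p i) :=
  liftL p (fun o => Option.rec (0 : ZMod (p i)) (fun j => if j = i then 1 else 0) o)
    (fun j => by
      by_cases h : j = i
      · subst h
        simp only [eq_self_iff_true, if_true, zsmul_eq_mul, mul_one]
        push_cast
        exact ZMod.natCast_self (p j)
      · simp [h])

lemma W1_egen (i : ι) : W1 p (egen p i) = (NN p : ℤ) / p i := liftL_egen p _ _ i
lemma W1_cgen : W1 p (cgen p) = (NN p : ℤ) := liftL_cgen p _ _
lemma W2_egen (i j : ι) : W2 p i (egen p j) = if j = i then 1 else 0 := liftL_egen p _ _ j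
lemma W2_cgen (i : ι) : W2 p i (cgen p) = 0 := liftL_cgen p _ _

lemma wtA_eq_iff (hp : ∀ i, 0 < p i) (m : (ι ⊕ Fin 2) →₀ ℕ) (k : ℕ) :
    wtA p m = k • cgen p ↔ ((∀ i, p i ∣ m (Sum.inl i)) ∧
      (∑ i : ι, m (Sum.inl i) / p i) + (m (Sum.inr 0) + m (Sum.inr 1)) = k) := by
  constructor
  · intro h
    have hdvd : ∀ i, p i ∣ m (Sum.inl i) := by
      intro i
      haveI : NeZero (p i) := ⟨(hp i).ne'⟩
      have h2 := congrArg (W2 p i) h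
      simp only [wtA, map_add, map_sum, map_nsmul, W2_cgen, W2_egen, smul_zero, add_zero] at h2
      rw [Finset.sum_eq_single i] at h2
      · simp only [if_pos rfl, smul_zero, add_zero, smul_eq_mul, mul_one] at h2
        have : ((m (Sum.inl i) : ZMod (p i))) = 0 := by
          simpa [nsmul_eq_mul] using h2
        exact (ZMod.natCast_eq_zero_iff _ _).mp this
      · intro b _ hb; simp [hb]
      · simp
    refine ⟨hdvd, ?_⟩
    have h1 := congrArg (W1 p) h
    simp only [wtA, map_add, map_sum, map_nsmul, W1_cgen, W1_egen] at h1
    have hterm : ∀ i : ι, m (Sum.inl i) • ((NN p : ℤ) / p i)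
        = ((m (Sum.inl i) / p i : ℕ) : ℤ) * NN p := by
      intro i
      obtain ⟨d, hd⟩ := hdvd i
      rw [hd, Nat.mul_div_cancel_left d (hp i)]
      simp only [nsmul_eq_mul]
      push_cast
      rw [mul_comm ((p i : ℤ)) (d : ℤ), mul_assoc,
        Int.mul_ediv_cancel' (Int.natCast_dvd_natCast.mpr (p_dvd_NN p i))]
    rw [Finset.sum_congr rfl (fun i _ => hterm i)] at h1
    rw [← Finset.sum_mul] at h1
    simp only [nsmul_eq_mul] at h1
    have hN : (NN p : ℤ) ≠ 0 := by exact_mod_cast (NN_pos p hp).ne'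
    have h2 : (((∑ i : ι, m (Sum.inl i) / p i) + (m (Sum.inr 0) + m (Sum.inr 1)) : ℕ) : ℤ)
        * NN p = (k : ℤ) * NN p := by rw [Nat.cast_add, Nat.cast_sum]; linear_combination h1
    exact_mod_cast mul_right_cancel₀ hN h2
  · rintro ⟨hdvd, hsum⟩
    rw [wtA]
    have : ∀ i : ι, m (Sum.inl i) • egen p i = (m (Sum.inl i) / p i) • cgen p := by
      intro i
      obtain ⟨d, hd⟩ := hdvd i
      rw [hd, Nat.mul_div_cancel_left d (hp i), mul_comm, mul_smul, p_smul_egen]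
    rw [Finset.sum_congr rfl (fun i _ => this i), ← Finset.sum_smul, ← add_smul, hsum]

end Aux

section Homog

lemma weight_one_fin2 (d : Fin 2 →₀ ℕ) : (Finsupp.weight 1 d : ℕ) = d 0 + d 1 := by
  rw [Finsupp.weight_apply, Finsupp.sum_fintype _ _ (by simp), Fin.sum_univ_two]
  simp

lemma fin2_single_ne : (Finsupp.single (0 : Fin 2) 1 : Fin 2 →₀ ℕ) ≠ Finsupp.single 1 1 := by
  intro h
  have := DFunLike.congr_fun h 0
  simp at this

lemma homog1_eq {f : MvPolynomial (Fin 2) ℂ} (hf : f.IsHomogeneous 1) :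
    f = C (coeff (Finsupp.single 0 1) f) * X 0 + C (coeff (Finsupp.single 1 1) f) * X 1 := by
  apply MvPolynomial.ext
  intro d
  rw [coeff_add, coeff_C_mul, coeff_C_mul, coeff_X', coeff_X']
  by_cases h0 : (Finsupp.single (0 : Fin 2) 1 : Fin 2 →₀ ℕ) = d
  · rw [if_pos h0, if_neg (by rw [← h0]; exact fun h => fin2_single_ne h.symm), ← h0]
    ring
  · rw [if_neg h0]
    by_cases h1 : (Finsupp.single (1 : Fin 2) 1 : Fin 2 →₀ ℕ) = d
    · rw [if_pos h1, ← h1]; ring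
    · rw [if_neg h1]
      by_cases hc : coeff d f = 0
      · rw [hc]; ring
      · exfalso
        have hd := hf hc
        rw [weight_one_fin2] at hd
        rcases Nat.add_eq_one_iff.mp hd with ⟨ha, hb⟩ | ⟨ha, hb⟩
        · exact h1 (Finsupp.ext fun a => by fin_cases a <;> simp [ha, hb])
        · exact h0 (Finsupp.ext fun a => by fin_cases a <;> simp [ha, hb])

lemma degree_fin2 (d : Fin 2 →₀ ℕ) : d.degree = d 0 + d 1 := by
  rw [Finsupp.degree, ← Fin.sum_univ_two d]
  exact Finset.sum_subset (Finset.subset_univ _)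
    (fun i _ h => Finsupp.notMem_support_iff.mp h)

def mon (k : ℕ) (j : Fin (k+1)) : MvPolynomial (Fin 2) ℂ :=
  monomial (Finsupp.single 0 (j : ℕ) + Finsupp.single 1 (k - j)) 1

lemma mon_mem (k : ℕ) (j : Fin (k+1)) : mon k j ∈ homogeneousSubmodule (Fin 2) ℂ k := by
  rw [mem_homogeneousSubmodule, mon]
  apply isHomogeneous_monomial
  rw [degree_fin2]
  simp
  omega

lemma mon_linearIndependent (k : ℕ) : LinearIndependent ℂ (mon k) := by
  have : mon k = (basisMonomials (Fin 2) ℂ) ∘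
      (fun j : Fin (k+1) => Finsupp.single 0 (j : ℕ) + Finsupp.single 1 (k - j)) := by
    funext j; rw [Function.comp_apply, coe_basisMonomials, mon]
  rw [this]
  apply (basisMonomials (Fin 2) ℂ).linearIndependent.comp
  intro a b hab
  have := DFunLike.congr_fun hab 0
  simp at this
  exact Fin.ext this

lemma span_mon (k : ℕ) :
    homogeneousSubmodule (Fin 2) ℂ k = Submodule.span ℂ (Set.range (mon k)) := by
  apply le_antisymm
  · intro f hf
    rw [mem_homogeneousSubmodule] at hf
    rw [← support_sum_monomial_coeff f]
    refine Submodule.sum_mem _ fun v hv => ?_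
    have hc : coeff v f ≠ 0 := by rwa [mem_support_iff] at hv
    have hd : v 0 + v 1 = k := by rw [← weight_one_fin2]; exact hf hc
    have hv0 : v 0 < k + 1 := by omega
    have hveq : v = Finsupp.single 0 (v 0) + Finsupp.single 1 (k - v 0) := by
      apply Finsupp.ext
      intro a
      fin_cases a <;> simp <;> omega
    have : monomial v (coeff v f) = (coeff v f) • mon k ⟨v 0, hv0⟩ := by
      rw [mon, smul_monomial, smul_eq_mul, mul_one, ← hveq]
    rw [this]
    exact Submodule.smul_mem _ _ (Submodule.subset_span ⟨_, rfl⟩)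
  · rw [Submodule.span_le]
    rintro _ ⟨j, rfl⟩
    exact mon_mem k j

lemma finrank_homog (k : ℕ) :
    Module.finrank ℂ (homogeneousSubmodule (Fin 2) ℂ k) = k + 1 := by
  rw [span_mon, finrank_span_eq_card (mon_linearIndependent k), Fintype.card_fin]

lemma eval_homog1 {f : MvPolynomial (Fin 2) ℂ} (hf : f.IsHomogeneous 1) (v : Fin 2 → ℂ) :
    eval v f = coeff (Finsupp.single 0 1) f * v 0 + coeff (Finsupp.single 1 1) f * v 1 := by
  conv_lhs => rw [homog1_eq hf]
  simp

lemma pair_nezero_eval {f g : MvPolynomial (Fin 2) ℂ} (hf : f.IsHomogeneous 1)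
    (hg : g.IsHomogeneous 1) (hind : LinearIndependent ℂ ![f, g]) :
    eval ![coeff (Finsupp.single 1 1) f, -coeff (Finsupp.single 0 1) f] g ≠ 0 := by
  set a1 := coeff (Finsupp.single 0 1) f with ha1
  set b1 := coeff (Finsupp.single 1 1) f with hb1
  set a2 := coeff (Finsupp.single 0 1) g with ha2
  set b2 := coeff (Finsupp.single 1 1) g with hb2
  rw [eval_homog1 hg]
  simp only [Matrix.cons_val_zero, Matrix.cons_val_one, Matrix.head_cons, ← ha2, ← hb2]
  intro hdet
  have hdet' : a2 * b1 - a1 * b2 = 0 := by linear_combination hdet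
  have hcomb1 : (-b2) • f + b1 • g = 0 := by
    rw [smul_eq_C_mul, smul_eq_C_mul]
    conv_lhs => rw [homog1_eq hf, homog1_eq hg]
    rw [← ha1, ← hb1, ← ha2, ← hb2, map_neg]
    have : (0 : MvPolynomial (Fin 2) ℂ) = C (a2 * b1 - a1 * b2) * X 0 := by
      rw [hdet', map_zero, zero_mul]
    rw [this, map_sub, map_mul, map_mul]
    ring
  have hcomb2 : (-a2) • f + a1 • g = 0 := by
    rw [smul_eq_C_mul, smul_eq_C_mul]
    conv_lhs => rw [homog1_eq hf, homog1_eq hg]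
    rw [← ha1, ← hb1, ← ha2, ← hb2, map_neg]
    have : (0 : MvPolynomial (Fin 2) ℂ) = C (a1 * b2 - a2 * b1) * X 1 := by
      rw [show a1 * b2 - a2 * b1 = 0 by linear_combination -hdet', map_zero, zero_mul]
    rw [this, map_sub, map_mul, map_mul]
    ring
  obtain ⟨-, hb1z⟩ := LinearIndependent.pair_iff.mp hind _ _ hcomb1
  obtain ⟨-, ha1z⟩ := LinearIndependent.pair_iff.mp hind _ _ hcomb2
  have hf0 : f = 0 := by
    rw [homog1_eq hf, ← ha1, ← hb1, ha1z, hb1z]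
    simp
  have := hind.ne_zero 0
  simp [hf0] at this

lemma prods_linearIndependent (m : ℕ) (G : Fin m → MvPolynomial (Fin 2) ℂ)
    (hG : ∀ i, (G i).IsHomogeneous 1)
    (hind : ∀ i j, i ≠ j → LinearIndependent ℂ ![G i, G j]) :
    LinearIndependent ℂ (fun i : Fin m => ∏ j ∈ Finset.univ.erase i, G j) := by
  rw [Fintype.linearIndependent_iff]
  intro a ha i
  set r : Fin 2 → ℂ :=
    ![coeff (Finsupp.single 1 1) (G i), -coeff (Finsupp.single 0 1) (G i)] with hr
  have hzero : eval r (G i) = 0 := by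
    rw [eval_homog1 (hG i), hr]
    simp
    ring
  have hev := congrArg (eval r) ha
  rw [map_sum, map_zero] at hev
  have hterm : ∀ k ∈ Finset.univ, k ≠ i →
      eval r (a k • ∏ j ∈ Finset.univ.erase k, G j) = 0 := by
    intro k _ hk
    rw [smul_eq_C_mul, map_mul, eval_C, map_prod]
    rw [Finset.prod_eq_zero (Finset.mem_erase.mpr ⟨Ne.symm hk, Finset.mem_univ i⟩) hzero]
    ring
  rw [Finset.sum_eq_single i hterm (by simp)] at hev
  rw [smul_eq_C_mul, map_mul, eval_C, map_prod] at hev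
  have hne : ∏ j ∈ Finset.univ.erase i, eval r (G j) ≠ 0 := by
    rw [Finset.prod_ne_zero_iff]
    intro j hj
    exact pair_nezero_eval (hG i) (hG j)
      (hind i j (Ne.symm (Finset.mem_erase.mp hj).1))
  exact (mul_eq_zero.mp hev).resolve_right hne

end Homog

section Phi

variable (ι : Type) [Fintype ι] [DecidableEq ι] (p : ι → ℕ) (c0 c1 : ι → ℂ)

def Phi : MvPolynomial (Fin 2) ℂ →ₐ[ℂ] SAlg ι p c0 c1 :=
  (Ideal.Quotient.mkₐ ℂ (SIdl ι p c0 c1)).comp (rename Sum.inr)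

lemma Phi_injective (hp : ∀ i, 0 < p i) : Function.Injective (Phi ι p c0 c1) := by
  intro f g h
  rw [Phi] at h
  simp only [AlgHom.comp_apply, Ideal.Quotient.mkₐ_eq_mk] at h
  have hmem : (rename Sum.inr (f - g) : SPoly ι) ∈ SIdl ι p c0 c1 := by
    rw [map_sub]
    exact (Ideal.Quotient.eq).mp h
  have := eq_zero_of_rename_mem_SIdl p c0 c1 hp hmem
  exact sub_eq_zero.mp this

lemma monomial_rep (hp : ∀ i, 0 < p i) (k : ℕ) (v : (ι ⊕ Fin 2) →₀ ℕ)
    (hv : wtA p v = k • cgen p) (c : ℂ) :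
    ∃ h ∈ homogeneousSubmodule (Fin 2) ℂ k,
      (Phi ι p c0 c1).toLinearMap h
        = Ideal.Quotient.mk (SIdl ι p c0 c1) (monomial v c) := by
  obtain ⟨hdvd, hsum⟩ := (wtA_eq_iff p hp v k).mp hv
  refine ⟨C c * ((∏ i : ι, (C (c0 i) * X 0 + C (c1 i) * X 1) ^ (v (Sum.inl i) / p i))
      * X 0 ^ (v (Sum.inr 0)) * X 1 ^ (v (Sum.inr 1))), ?_, ?_⟩
  · rw [mem_homogeneousSubmodule]
    have h1 : ∀ i : ι,
        ((C (c0 i) * X (0:Fin 2) + C (c1 i) * X 1 : MvPolynomial (Fin 2) ℂ)).IsHomogeneous 1 := by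
      intro i
      have := ((isHomogeneous_C (Fin 2) (c0 i)).mul (isHomogeneous_X ℂ 0)).add
        (((isHomogeneous_C (Fin 2) (c1 i)).mul (isHomogeneous_X ℂ 1)))
      simpa using this
    have hprod : (∏ i : ι, ((C (c0 i) * X 0 + C (c1 i) * X 1 : MvPolynomial (Fin 2) ℂ))
        ^ (v (Sum.inl i) / p i)).IsHomogeneous (∑ i : ι, v (Sum.inl i) / p i) := by
      have := MvPolynomial.IsHomogeneous.prod Finset.univ _
        (fun i => 1 * (v (Sum.inl i) / p i)) (fun i _ => (h1 i).pow _)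
      simpa using this
    have htot := ((isHomogeneous_C (Fin 2) c).mul
      (((hprod.mul ((isHomogeneous_X ℂ 0).pow (v (Sum.inr 0)))).mul
        ((isHomogeneous_X ℂ 1).pow (v (Sum.inr 1))))))
    have hdeg : 0 + ((∑ i : ι, v (Sum.inl i) / p i) + 1 * v (Sum.inr 0) + 1 * v (Sum.inr 1))
        = k := by omega
    rw [← hdeg]
    exact htot
  · have key : (rename Sum.inr (C c * ((∏ i : ι,
        ((C (c0 i) * X 0 + C (c1 i) * X 1 : MvPolynomial (Fin 2) ℂ)) ^ (v (Sum.inl i) / p i))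
        * X 0 ^ (v (Sum.inr 0)) * X 1 ^ (v (Sum.inr 1)))) : SPoly ι)
        = C c * ((∏ i : ι, (C (c0 i) * X (Sum.inr 0) + C (c1 i) * X (Sum.inr 1))
            ^ (v (Sum.inl i) / p i))
          * X (Sum.inr 0) ^ (v (Sum.inr 0)) * X (Sum.inr 1) ^ (v (Sum.inr 1))) := by
      simp [map_mul, map_prod, map_pow, map_add, rename_C, rename_X]
    have hmono : (monomial v c : SPoly ι)
        = C c * ((∏ i : ι, X (Sum.inl i) ^ v (Sum.inl i))
          * X (Sum.inr 0) ^ (v (Sum.inr 0)) * X (Sum.inr 1) ^ (v (Sum.inr 1))) := by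
      rw [monomial_eq, Finsupp.prod_fintype _ _ (fun s => pow_zero _),
        Fintype.prod_sum_type, Fin.prod_univ_two]
      ring
    have relX : ∀ i : ι, Ideal.Quotient.mk (SIdl ι p c0 c1) (X (Sum.inl i) ^ p i)
        = Ideal.Quotient.mk (SIdl ι p c0 c1)
          (C (c0 i) * X (Sum.inr 0) + C (c1 i) * X (Sum.inr 1)) := fun i =>
      Ideal.Quotient.eq.mpr (Ideal.subset_span ⟨i, rfl⟩)
    have hfac : ∀ i : ι,
        (Ideal.Quotient.mk (SIdl ι p c0 c1) (X (Sum.inl i))) ^ (v (Sum.inl i))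
        = (Ideal.Quotient.mk (SIdl ι p c0 c1)
            (C (c0 i) * X (Sum.inr 0) + C (c1 i) * X (Sum.inr 1))) ^ (v (Sum.inl i) / p i) := by
      intro i
      conv_lhs => rw [← Nat.mul_div_cancel' (hdvd i)]
      rw [pow_mul, ← map_pow, relX i]
    simp only [AlgHom.toLinearMap_apply, Phi, AlgHom.comp_apply, Ideal.Quotient.mkₐ_eq_mk]
    rw [key, hmono]
    simp only [map_mul, map_prod, map_pow]
    rw [Finset.prod_congr rfl (fun i _ => (hfac i).symm)]

lemma map_homog_eq_SCompA (hp : ∀ i, 0 < p i) (k : ℕ) :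
    Submodule.map (Phi ι p c0 c1).toLinearMap (homogeneousSubmodule (Fin 2) ℂ k)
      = SCompA p c0 c1 (k • cgen p) := by
  apply le_antisymm
  · rintro _ ⟨f, hf, rfl⟩
    rw [SetLike.mem_coe, mem_homogeneousSubmodule] at hf
    refine ⟨rename Sum.inr f, ?_, rfl⟩
    intro mm hmm
    obtain ⟨u, rfl, hu⟩ := coeff_rename_ne_zero _ _ _ hmm
    have h1 : ∀ i : ι, Finsupp.mapDomain Sum.inr u (Sum.inl i) = 0 := fun i =>
      Finsupp.mapDomain_notin_range _ _ (by rintro ⟨x, hx⟩; simp at hx)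
    have h2 : ∀ j : Fin 2, Finsupp.mapDomain (Sum.inr : Fin 2 → ι ⊕ Fin 2) u (Sum.inr j) = u j :=
      fun j => Finsupp.mapDomain_apply Sum.inr_injective u j
    have hdeg : u 0 + u 1 = k := by rw [← weight_one_fin2]; exact hf hu
    rw [wtA]
    simp only [h1, h2, zero_nsmul, Finset.sum_const_zero, zero_add]
    rw [hdeg]
  · rintro _ ⟨f, hf, rfl⟩
    simp only [AlgHom.toLinearMap_apply, Ideal.Quotient.mkₐ_eq_mk]
    rw [← support_sum_monomial_coeff f, map_sum]
    refine Submodule.sum_mem _ fun v hv => ?_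
    obtain ⟨h, hh, heq⟩ := monomial_rep ι p c0 c1 hp k v
      (hf v (by rwa [mem_support_iff] at hv)) (coeff v f)
    exact ⟨h, hh, heq⟩

end Phi

/-- If `g₁,…,g_m ∈ S_c` are pairwise linearly independent, then the
products `∏_{j≠i} g_j` form a `ℂ`-basis of `S_{(m−1)c}`. -/
theorem products_basis_of_pairwise_independent (n : ℕ) (hn : 1 ≤ n) (p : Fin n → ℕ)
    (hp : ∀ i, 2 ≤ p i)
    (c0 c1 : Fin n → ℂ) (hnz : ∀ i, (c0 i, c1 i) ≠ (0, 0))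
    (hdist : ∀ i j : Fin n, i ≠ j → c0 i * c1 j ≠ c1 i * c0 j)
    (m : ℕ) (hm : 1 ≤ m) (g : Fin m → SAlg (Fin n) p c0 c1)
    (hg : ∀ i, g i ∈ SCompA p c0 c1 (cgen p))
    (hind : ∀ i j : Fin m, i ≠ j → LinearIndependent ℂ ![g i, g j]) :
    LinearIndependent ℂ (fun i : Fin m => ∏ j ∈ Finset.univ.erase i, g j) ∧
      Submodule.span ℂ (Set.range (fun i : Fin m => ∏ j ∈ Finset.univ.erase i, g j)) =
        SCompA p c0 c1 ((m - 1) • cgen p) := by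
  classical
  have hp' : ∀ i, 0 < p i := fun i => lt_of_lt_of_le (by norm_num) (hp i)
  set Φ := Phi (Fin n) p c0 c1 with hΦ
  have hker : LinearMap.ker Φ.toLinearMap = ⊥ :=
    LinearMap.ker_eq_bot.mpr (Phi_injective (Fin n) p c0 c1 hp')
  -- pull back the g i to linear binary forms
  have hgi : ∀ i, ∃ G ∈ homogeneousSubmodule (Fin 2) ℂ 1, Φ.toLinearMap G = g i := by
    intro i
    have := hg i
    rw [show cgen p = (1 : ℕ) • cgen p by rw [one_nsmul],
      ← map_homog_eq_SCompA (Fin n) p c0 c1 hp' 1] at this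
    obtain ⟨G, hG, hGe⟩ := this
    exact ⟨G, hG, hGe⟩
  choose G hGmem hGeq using hgi
  have hG1 : ∀ i, (G i).IsHomogeneous 1 := fun i =>
    (mem_homogeneousSubmodule _ _).mp (hGmem i)
  have hGpair : ∀ i j : Fin m, i ≠ j → LinearIndependent ℂ ![G i, G j] := by
    intro i j hij
    apply LinearIndependent.of_comp Φ.toLinearMap
    have : Φ.toLinearMap ∘ ![G i, G j] = ![g i, g j] := by
      funext x
      fin_cases x <;> simp [hGeq] <;> exact hGeq _
    rw [this]
    exact hind i j hij
  set P : Fin m → MvPolynomial (Fin 2) ℂ := fun i => ∏ j ∈ Finset.univ.erase i, G j with hP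
  have hPind : LinearIndependent ℂ P := prods_linearIndependent m G hG1 hGpair
  have hPmem : ∀ i, P i ∈ homogeneousSubmodule (Fin 2) ℂ (m - 1) := by
    intro i
    rw [mem_homogeneousSubmodule, hP]
    have := MvPolynomial.IsHomogeneous.prod (Finset.univ.erase i) G (fun _ => 1)
      (fun j _ => hG1 j)
    have hcard : ∑ _j ∈ Finset.univ.erase i, 1 = m - 1 := by
      rw [Finset.sum_const, smul_eq_mul, mul_one, Finset.card_erase_of_mem (Finset.mem_univ i),
        Finset.card_univ, Fintype.card_fin]
    rwa [hcard] at this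
  have hgP : (fun i : Fin m => ∏ j ∈ Finset.univ.erase i, g j) = Φ.toLinearMap ∘ P := by
    funext i
    simp only [Function.comp_apply, hP, AlgHom.toLinearMap_apply, map_prod]
    exact Finset.prod_congr rfl fun j _ => (hGeq j).symm
  constructor
  · rw [hgP]
    exact hPind.map' Φ.toLinearMap hker
  · have hspanP : Submodule.span ℂ (Set.range P) = homogeneousSubmodule (Fin 2) ℂ (m - 1) := by
      haveI : FiniteDimensional ℂ (homogeneousSubmodule (Fin 2) ℂ (m - 1)) := by
        rw [span_mon]
        exact FiniteDimensional.span_of_finite ℂ (Set.finite_range _)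
      apply Submodule.eq_of_le_of_finrank_eq
      · rw [Submodule.span_le]
        rintro _ ⟨i, rfl⟩
        exact hPmem i
      · rw [finrank_span_eq_card hPind, finrank_homog, Fintype.card_fin]
        omega
    rw [hgP, Set.range_comp, ← Submodule.map_span, hspanP,
      map_homog_eq_SCompA (Fin n) p c0 c1 hp' (m - 1)]
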